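/- arXiv:1709.01670 — 3 statements merged into one kernel-verified Lean document; each statement's English description precedes it below -/
import Mathlib

section
/- (Brucker et al.) For every instance with m ≥ 1 machines and n jobs, each job j having a release date r_j ∈ ℕ, a due date d_j ∈ ℕ, and a weight w_j ∈ ℕ, the minimum weighted number of tardy jobs in the unit-time open shop problem equals the minimum weighted number of tardy jobs in the corresponding parallel-machine problem with integer preemption: min over feasible unit-time open shop schedules t of Σ_j w_j·U_j(t) = min over feasible parallel-machine slot assignments (T_1,…,T_n) of Σ_j w_j·U_j(T). -/
/-- A feasible unit-time open shop schedule (`O|p_ij=1,r_j|Σ w_j U_j`): `t i j` is the time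
slot in which machine `i` processes job `j`; it respects release dates, each machine
processes at most one job per slot, and each job is processed by at most one machine
per slot. -/
def UnitOSFeasible (m n : ℕ) (r : Fin n → ℕ) (t : Fin m → Fin n → ℕ) : Prop :=
  (∀ (i : Fin m) (j : Fin n), r j ≤ t i j) ∧
  (∀ i : Fin m, ∀ j j' : Fin n, j ≠ j' → t i j ≠ t i j') ∧
  (∀ j : Fin n, ∀ i i' : Fin m, i ≠ i' → t i j ≠ t i' j)

/-- The weighted number of tardy jobs of a unit-time open shop schedule,
where job `j` completes at time `1 + max_i t i j`. -/
def UnitOSCost (m n : ℕ) (d w : Fin n → ℕ) (t : Fin m → Fin n → ℕ) : ℕ :=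
  ∑ j : Fin n, if d j < 1 + Finset.univ.sup (fun i : Fin m => t i j) then w j else 0

/-- A feasible slot assignment for `P|p_j=m,pmtn_ℤ,r_j|Σ w_j U_j`: each job `j` gets a set
`T j` of exactly `m` distinct unit time slots, all at least `r j`, and each time slot is
used by at most `m` jobs. -/
def PmtnFeasible (m n : ℕ) (r : Fin n → ℕ) (T : Fin n → Finset ℕ) : Prop :=
  (∀ j : Fin n, (T j).card = m) ∧
  (∀ j : Fin n, ∀ x ∈ T j, r j ≤ x) ∧
  (∀ τ : ℕ, (Finset.univ.filter fun j : Fin n => τ ∈ T j).card ≤ m)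

/-- The weighted number of tardy jobs of a slot assignment, where job `j` completes at
time `1 + max T j`. -/
def PmtnCost (n : ℕ) (d w : Fin n → ℕ) (T : Fin n → Finset ℕ) : ℕ :=
  ∑ j : Fin n, if d j < 1 + (T j).sup id then w j else 0


open Finset

private lemma double_count {α : Type*} (s : Finset α) (B : Finset ℕ) (T : α → Finset ℕ) :
    ∑ τ ∈ B, (s.filter fun j => τ ∈ T j).card
      = ∑ j ∈ s, (B.filter fun τ => τ ∈ T j).card := by
  simp only [card_filter]
  exact Finset.sum_comm

private lemma decomp (m : ℕ) : ∀ (n : ℕ) (T : Fin n → Finset ℕ),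
    (∀ j, (T j).card = m) →
    (∀ τ : ℕ, (Finset.univ.filter fun j : Fin n => τ ∈ T j).card ≤ m) →
    ∃ t : Fin m → Fin n → ℕ,
      (∀ i j, t i j ∈ T j) ∧
      (∀ i : Fin m, ∀ j j' : Fin n, j ≠ j' → t i j ≠ t i j') ∧
      (∀ j : Fin n, ∀ i i' : Fin m, i ≠ i' → t i j ≠ t i' j) := by
  induction m with
  | zero =>
    intro n T _ _
    exact ⟨fun i => i.elim0, fun i => i.elim0, fun i => i.elim0, fun j i => i.elim0⟩
  | succ m ih =>
    intro n T hcard hdeg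
    classical
    set R : Finset ℕ := Finset.univ.biUnion T with hR
    have hTR : ∀ j, T j ⊆ R := fun j => subset_biUnion_of_mem T (mem_univ j)
    set F : Finset ℕ :=
      R.filter (fun τ => (Finset.univ.filter fun j : Fin n => τ ∈ T j).card = m + 1) with hF
    have hFR : F ⊆ R := filter_subset _ _
    have hcard_le : ∀ (s : Finset (Fin n)), s.card ≤ (s.biUnion T).card := by
      intro s
      have hsum : (m+1) * s.card = ∑ τ ∈ s.biUnion T, (s.filter fun j => τ ∈ T j).card := by
        rw [double_count]
        have hc : ∀ j ∈ s, ((s.biUnion T).filter fun τ => τ ∈ T j).card = m + 1 := by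
          intro j hj
          have hsub : T j ⊆ s.biUnion T := subset_biUnion_of_mem T hj
          have heq : (s.biUnion T).filter (fun τ => τ ∈ T j) = T j := by
            ext τ; simp only [mem_filter]
            exact ⟨fun h => h.2, fun h => ⟨hsub h, h⟩⟩
          rw [heq, hcard]
        rw [sum_congr rfl hc, sum_const, smul_eq_mul, mul_comm]
      have h1 : (m+1) * s.card ≤ (m+1) * (s.biUnion T).card := by
        rw [hsum]
        calc ∑ τ ∈ s.biUnion T, (s.filter fun j => τ ∈ T j).card
            ≤ ∑ _τ ∈ s.biUnion T, (m+1) := by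
              refine sum_le_sum fun τ _ => ?_
              exact le_trans (card_le_card (filter_subset_filter _ (subset_univ s))) (hdeg τ)
          _ = (s.biUnion T).card * (m+1) := by rw [sum_const, smul_eq_mul]
          _ = (m+1) * (s.biUnion T).card := mul_comm _ _
      exact Nat.le_of_mul_le_mul_left h1 (Nat.succ_pos m)
    have hnR : n ≤ R.card := by
      have := hcard_le Finset.univ
      simpa using this
    set k := R.card - n with hk
    set A : (Fin n ⊕ Fin k) → Finset ℕ := Sum.elim T (fun _ => R \ F) with hA
    have hall : ∀ (s : Finset (Fin n ⊕ Fin k)), s.card ≤ (s.biUnion A).card := by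
      intro s
      have hsplit : s.toLeft.card + s.toRight.card = s.card := card_toLeft_add_card_toRight
      have hUsub : s.toLeft.biUnion T ⊆ s.biUnion A := by
        intro τ hτ
        obtain ⟨j, hj, hjτ⟩ := mem_biUnion.mp hτ
        exact mem_biUnion.mpr ⟨Sum.inl j, mem_toLeft.mp hj, hjτ⟩
      rcases s.toRight.eq_empty_or_nonempty with hempty | ⟨dd, hdd⟩
      · have h1 : s.card = s.toLeft.card := by rw [← hsplit, hempty]; simp
        rw [h1]
        exact le_trans (hcard_le s.toLeft) (card_le_card hUsub)
      · have hRF : R \ F ⊆ s.biUnion A := fun τ hτ =>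
          mem_biUnion.mpr ⟨Sum.inr dd, mem_toRight.mp hdd, hτ⟩
        set sA := s.toLeft with hsA
        set U := sA.biUnion T with hU
        -- claim2 : (F \ U).card + sA.card ≤ n
        have claim2 : (F \ U).card + sA.card ≤ n := by
          have e1 : (m+1) * (F \ U).card
              = ∑ τ ∈ F \ U, (Finset.univ.filter fun j : Fin n => τ ∈ T j).card := by
            have hc : ∀ τ ∈ F \ U, (Finset.univ.filter fun j : Fin n => τ ∈ T j).card = m + 1 := by
              intro τ hτ
              exact (mem_filter.mp (mem_sdiff.mp hτ).1).2
            rw [sum_congr rfl hc, sum_const, smul_eq_mul, mul_comm]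
          have e2 : ∑ τ ∈ F \ U, (Finset.univ.filter fun j : Fin n => τ ∈ T j).card
              ≤ ∑ τ ∈ F \ U, ((Finset.univ \ sA).filter fun j : Fin n => τ ∈ T j).card := by
            refine sum_le_sum fun τ hτ => ?_
            refine card_le_card fun j hj => ?_
            have hjT : τ ∈ T j := (mem_filter.mp hj).2
            have hjA : j ∉ sA := fun hjsA => (mem_sdiff.mp hτ).2 (mem_biUnion.mpr ⟨j, hjsA, hjT⟩)
            exact mem_filter.mpr ⟨mem_sdiff.mpr ⟨mem_univ j, hjA⟩, hjT⟩
          have e3 : ∑ τ ∈ F \ U, ((Finset.univ \ sA).filter fun j : Fin n => τ ∈ T j).card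
              ≤ (Finset.univ \ sA).card * (m+1) := by
            rw [double_count]
            calc ∑ j ∈ Finset.univ \ sA, ((F \ U).filter fun τ => τ ∈ T j).card
                ≤ ∑ j ∈ Finset.univ \ sA, (m+1) := by
                  refine sum_le_sum fun j _ => ?_
                  have : (F \ U).filter (fun τ => τ ∈ T j) ⊆ T j := fun τ hτ =>
                    (mem_filter.mp hτ).2
                  exact le_trans (card_le_card this) (le_of_eq (hcard j))
              _ = (Finset.univ \ sA).card * (m+1) := by rw [sum_const, smul_eq_mul]
          have e4 : (Finset.univ \ sA).card = n - sA.card := by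
            rw [card_sdiff_of_subset (subset_univ sA)]; simp
          have e5 : (m+1) * (F \ U).card ≤ (m+1) * (n - sA.card) := by
            rw [e1]; rw [e4] at e3
            calc _ ≤ _ := e2
              _ ≤ (n - sA.card) * (m+1) := e3
              _ = (m+1) * (n - sA.card) := mul_comm _ _
          have e6 : (F \ U).card ≤ n - sA.card := Nat.le_of_mul_le_mul_left e5 (Nat.succ_pos m)
          have e7 : sA.card ≤ n := by
            have := card_le_univ sA; simpa using this
          omega
        have hW : (R \ F) ∪ (F ∩ U) ⊆ s.biUnion A := by
          refine union_subset hRF ?_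
          exact fun τ hτ => hUsub (mem_inter.mp hτ).2
        have hWcard : ((R \ F) ∪ (F ∩ U)).card = (R.card - F.card) + (F ∩ U).card := by
          rw [card_union_of_disjoint (sdiff_disjoint.mono_right inter_subset_left), card_sdiff_of_subset hFR]
        have hFsplit : (F \ U).card + (F ∩ U).card = F.card := card_sdiff_add_card_inter F U
        have hFcard : F.card ≤ R.card := card_le_card hFR
        have hsD : s.toRight.card ≤ k := by
          have := card_le_univ s.toRight; simpa using this
        have hfin : ((R \ F) ∪ (F ∩ U)).card ≤ (s.biUnion A).card := card_le_card hW
        omega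
    obtain ⟨f, hfinj, hfmem⟩ := (Finset.all_card_le_biUnion_card_iff_exists_injective A).mp hall
    set φ : Fin n → ℕ := fun j => f (Sum.inl j) with hφ
    have hφmem : ∀ j, φ j ∈ T j := fun j => hfmem (Sum.inl j)
    have hφinj : Function.Injective φ := fun j j' h => by
      have := hfinj h; exact Sum.inl_injective this
    have himg : Finset.univ.image f = R := by
      apply eq_of_subset_of_card_le
      · intro τ hτ
        obtain ⟨x, -, rfl⟩ := mem_image.mp hτ
        cases x with
        | inl j => exact hTR j (hfmem _)
        | inr d => exact (mem_sdiff.mp (hfmem (Sum.inr d))).1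
      · rw [card_image_of_injective _ hfinj, card_univ]
        simp only [Fintype.card_sum, Fintype.card_fin]
        omega
    have hFcov : ∀ τ ∈ F, ∃ j : Fin n, φ j = τ := by
      intro τ hτ
      have hτR : τ ∈ Finset.univ.image f := himg ▸ hFR hτ
      obtain ⟨x, -, hx⟩ := mem_image.mp hτR
      cases x with
      | inl j => exact ⟨j, hx⟩
      | inr d =>
        exact absurd hτ (by rw [← hx]; exact (mem_sdiff.mp (hfmem (Sum.inr d))).2)
    set T' : Fin n → Finset ℕ := fun j => (T j).erase (φ j) with hT'
    have hcard' : ∀ j, (T' j).card = m := by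
      intro j
      have : (T' j).card = (T j).card - 1 := card_erase_of_mem (hφmem j)
      rw [this, hcard]
      omega
    have hdeg' : ∀ τ : ℕ, (Finset.univ.filter fun j : Fin n => τ ∈ T' j).card ≤ m := by
      intro τ
      by_cases hfull : (Finset.univ.filter fun j : Fin n => τ ∈ T j).card = m + 1
      · have hτR : τ ∈ R := by
          have hpos : 0 < (Finset.univ.filter fun j : Fin n => τ ∈ T j).card := by omega
          obtain ⟨j, hj⟩ := card_pos.mp hpos
          exact hTR j (mem_filter.mp hj).2
        have hτF : τ ∈ F := mem_filter.mpr ⟨hτR, hfull⟩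
        obtain ⟨j0, hj0⟩ := hFcov τ hτF
        have hsub : (Finset.univ.filter fun j : Fin n => τ ∈ T' j)
            ⊆ (Finset.univ.filter fun j : Fin n => τ ∈ T j).erase j0 := by
          intro j hj
          have hj' := mem_filter.mp hj
          have hmem' := mem_erase.mp hj'.2
          refine mem_erase.mpr ⟨?_, mem_filter.mpr ⟨mem_univ j, hmem'.2⟩⟩
          rintro rfl
          exact hmem'.1 hj0.symm
        calc (Finset.univ.filter fun j : Fin n => τ ∈ T' j).card
            ≤ ((Finset.univ.filter fun j : Fin n => τ ∈ T j).erase j0).card :=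
              card_le_card hsub
          _ ≤ (Finset.univ.filter fun j : Fin n => τ ∈ T j).card - 1 :=
              le_of_eq (card_erase_of_mem (mem_filter.mpr ⟨mem_univ j0, hj0 ▸ hφmem j0⟩))
          _ ≤ m := by omega
      · have hle : (Finset.univ.filter fun j : Fin n => τ ∈ T j).card ≤ m := by
          have := hdeg τ; omega
        refine le_trans (card_le_card ?_) hle
        intro j hj
        have := mem_filter.mp hj
        exact mem_filter.mpr ⟨this.1, mem_of_mem_erase this.2⟩
    obtain ⟨t', h1', h2', h3'⟩ := ih n T' hcard' hdeg'
    refine ⟨fun i => Fin.cases φ t' i, ?_, ?_, ?_⟩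
    · intro i j
      refine Fin.cases ?_ ?_ i
      · simpa using hφmem j
      · intro i'
        simp only [Fin.cases_succ]
        exact mem_of_mem_erase (h1' i' j)
    · intro i j j' hjj'
      refine Fin.cases ?_ ?_ i
      · simpa using fun h => hjj' (hφinj h)
      · intro i'
        simpa using h2' i' j j' hjj'
    · intro j i i' hne
      rcases Fin.eq_zero_or_eq_succ i with rfl | ⟨a, rfl⟩ <;>
        rcases Fin.eq_zero_or_eq_succ i' with rfl | ⟨a', rfl⟩
      · exact absurd rfl hne
      · simp only [Fin.cases_zero, Fin.cases_succ]
        exact fun h => (mem_erase.mp (h1' a' j)).1 h.symm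
      · simp only [Fin.cases_zero, Fin.cases_succ]
        exact fun h => (mem_erase.mp (h1' a j)).1 h
      · simp only [Fin.cases_succ]
        exact h3' j a a' (fun h => hne (by rw [h]))

/-- (Brucker et al.) The minimum weighted number of tardy jobs in the unit-time open shop
problem `O|p_ij=1,r_j|Σ w_j U_j` equals the minimum weighted number of tardy jobs in the
parallel-machine problem with integer preemption `P|p_j=m,pmtn_ℤ,r_j|Σ w_j U_j`. -/
theorem unitOpenShop_eq_pmtnParallel (m n : ℕ) (hm : 1 ≤ m) (r d w : Fin n → ℕ) :
    sInf {v : ℕ | ∃ t : Fin m → Fin n → ℕ, UnitOSFeasible m n r t ∧ UnitOSCost m n d w t = v}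
      = sInf {v : ℕ | ∃ T : Fin n → Finset ℕ, PmtnFeasible m n r T ∧ PmtnCost n d w T = v} := by
  classical
  have hset : {v : ℕ | ∃ t : Fin m → Fin n → ℕ, UnitOSFeasible m n r t ∧ UnitOSCost m n d w t = v}
      = {v : ℕ | ∃ T : Fin n → Finset ℕ, PmtnFeasible m n r T ∧ PmtnCost n d w T = v} := by
    ext v
    simp only [Set.mem_setOf_eq]
    constructor
    · rintro ⟨t, ⟨hr, hrow, hcol⟩, rfl⟩
      have hinj : ∀ j : Fin n, Function.Injective (fun i : Fin m => t i j) := by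
        intro j i i' h
        by_contra hne
        exact hcol j i i' hne h
      refine ⟨fun j => Finset.univ.image (fun i => t i j), ⟨?_, ?_, ?_⟩, ?_⟩
      · intro j
        rw [card_image_of_injective _ (hinj j), card_univ, Fintype.card_fin]
      · intro j x hx
        obtain ⟨i, -, rfl⟩ := mem_image.mp hx
        exact hr i j
      · intro τ
        have hex : ∀ j ∈ (Finset.univ.filter fun j : Fin n =>
            τ ∈ Finset.univ.image (fun i => t i j)), ∃ i : Fin m, t i j = τ := by
          intro j hj
          obtain ⟨i, -, hi⟩ := mem_image.mp (mem_filter.mp hj).2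
          exact ⟨i, hi⟩
        calc (Finset.univ.filter fun j : Fin n => τ ∈ Finset.univ.image (fun i => t i j)).card
            ≤ (Finset.univ : Finset (Fin m)).card := by
              refine card_le_card_of_injOn
                (fun j => if h : ∃ i : Fin m, t i j = τ then h.choose else ⟨0, hm⟩)
                (fun j _ => mem_univ _) ?_
              intro j hj j' hj' hjj'
              have h1 := hex j (Finset.mem_coe.mp hj)
              have h2 := hex j' (Finset.mem_coe.mp hj')
              dsimp only at hjj'
              rw [dif_pos h1, dif_pos h2] at hjj'
              by_contra hne
              have e1 : t h1.choose j = τ := h1.choose_spec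
              have e2 : t h2.choose j' = τ := h2.choose_spec
              rw [hjj'] at e1
              exact hrow h2.choose j j' hne (e1.trans e2.symm)
          _ = m := by rw [card_univ, Fintype.card_fin]
      · unfold UnitOSCost PmtnCost
        refine Finset.sum_congr rfl fun j _ => ?_
        rw [Finset.sup_image]
        rfl
    · rintro ⟨T, ⟨hcard, hrel, hdeg⟩, rfl⟩
      obtain ⟨t, hmem, hrow, hcol⟩ := decomp m n T hcard hdeg
      have hinj : ∀ j : Fin n, Function.Injective (fun i : Fin m => t i j) := by
        intro j i i' h
        by_contra hne
        exact hcol j i i' hne h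
      have himg : ∀ j, Finset.univ.image (fun i => t i j) = T j := by
        intro j
        refine eq_of_subset_of_card_le ?_ ?_
        · intro x hx
          obtain ⟨i, -, rfl⟩ := mem_image.mp hx
          exact hmem i j
        · rw [card_image_of_injective _ (hinj j), card_univ, Fintype.card_fin, hcard j]
      refine ⟨t, ⟨fun i j => hrel j _ (hmem i j), hrow, hcol⟩, ?_⟩
      unfold UnitOSCost PmtnCost
      refine Finset.sum_congr rfl fun j _ => ?_
      rw [← himg j, Finset.sup_image]
      rfl
  rw [hset]
end

section
/- For minimizing the weighted number of tardy jobs for n jobs with a common processing time p ≥ 1 on m ≥ 1 parallel identical machines (P|p_j=p|Σw_jU_j), the minimum of Σ_j w_j·U_j over all feasible schedules equals the minimum over all bijections σ : {1,…,n} → {1,…,n} of Σ_{k=1}^n w_{σ(k)} · [ p·⌈k/m⌉ > d_{σ(k)} ]; in particular, there is an optimal schedule in which the job completed k-th (in order of completion) finishes exactly at time p·⌈k/m⌉. -/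
/-- A feasible schedule on `m` parallel identical machines for `n` jobs of common
processing time `p`: job `j` is processed on machine `μ j` starting at time `s j`, and
the processing intervals `[s j, s j + p)` of distinct jobs on the same machine are
pairwise disjoint. -/
def PMFeasible (m n p : ℕ) (μ : Fin n → Fin m) (s : Fin n → ℕ) : Prop :=
  ∀ j j' : Fin n, j ≠ j' → μ j = μ j' →
    Disjoint (Set.Ico (s j) (s j + p)) (Set.Ico (s j') (s j' + p))

/-- The weighted number of tardy jobs `Σ_j w_j · U_j` of a schedule, where job `j` is
tardy iff its completion time `s j + p` exceeds its due date `d j`. -/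
def PMTardyCost (n p : ℕ) (d w : Fin n → ℕ) (s : Fin n → ℕ) : ℕ :=
  ∑ j : Fin n, if d j < s j + p then w j else 0

/-- The weighted number of tardy jobs of the schedule induced by a permutation `σ`,
where the job `σ k` completed `(k+1)`-st finishes exactly at time `p·⌈(k+1)/m⌉`
(note `⌈(k+1)/m⌉ = (k + m) / m` for natural division, since `m ≥ 1`). -/
def PermTardyCost (m n p : ℕ) (d w : Fin n → ℕ) (σ : Equiv.Perm (Fin n)) : ℕ :=
  ∑ k : Fin n, if d (σ k) < p * ((k.1 + m) / m) then w (σ k) else 0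

lemma perm_schedule_exists (m n p : ℕ) (hm : 1 ≤ m) (hp : 1 ≤ p) (d w : Fin n → ℕ)
    (σ : Equiv.Perm (Fin n)) :
    ∃ (μ : Fin n → Fin m) (s : Fin n → ℕ),
      PMFeasible m n p μ s ∧ PMTardyCost n p d w s = PermTardyCost m n p d w σ := by
  refine ⟨fun j => ⟨(σ.symm j).1 % m, Nat.mod_lt _ hm⟩,
    fun j => p * ((σ.symm j).1 / m), ?_, ?_⟩
  · intro j j' hne hμ
    have hval : (σ.symm j).1 % m = (σ.symm j').1 % m := congrArg Fin.val hμ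
    have hkne : (σ.symm j).1 ≠ (σ.symm j').1 := by
      intro h
      exact hne (by
        have : σ.symm j = σ.symm j' := Fin.ext h
        exact σ.symm.injective this)
    set a := (σ.symm j).1 / m with ha
    set b := (σ.symm j').1 / m with hb
    have hab : a ≠ b := by
      intro h
      apply hkne
      have h1 : m * a + (σ.symm j).1 % m = (σ.symm j).1 := Nat.div_add_mod _ m
      have h2 : m * b + (σ.symm j').1 % m = (σ.symm j').1 := Nat.div_add_mod _ m
      rw [h] at h1
      omega
    rw [Set.Ico_disjoint_Ico]
    rcases Nat.lt_or_ge a b with h | h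
    · calc min (p * a + p) (p * b + p) ≤ p * a + p := min_le_left _ _
        _ = p * (a + 1) := by ring
        _ ≤ p * b := Nat.mul_le_mul_left p h
        _ ≤ max (p * a) (p * b) := le_max_right _ _
    · have h' : b < a := lt_of_le_of_ne h (fun hba => hab hba.symm)
      calc min (p * a + p) (p * b + p) ≤ p * b + p := min_le_right _ _
        _ = p * (b + 1) := by ring
        _ ≤ p * a := Nat.mul_le_mul_left p (by omega)
        _ ≤ max (p * a) (p * b) := le_max_left _ _
  · unfold PMTardyCost PermTardyCost
    rw [← Equiv.sum_comp σ (fun j => if d j < p * ((σ.symm j).1 / m) + p then w j else 0)]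
    apply Finset.sum_congr rfl
    intro k _
    have h1 : σ.symm (σ k) = k := σ.symm_apply_apply k
    have h2 : p * (k.1 / m) + p = p * ((k.1 + m) / m) := by
      rw [Nat.add_div_right _ hm, Nat.mul_add, Nat.mul_one]
    rw [h1, h2]

lemma schedule_start_lb (m n p : ℕ) (hm : 1 ≤ m) (hp : 1 ≤ p)
    (μ : Fin n → Fin m) (s : Fin n → ℕ) (hf : PMFeasible m n p μ s) (k : Fin n) :
    p * (k.1 / m) ≤ s (Tuple.sort s k) := by
  set σ := Tuple.sort s with hσ
  have hmono : Monotone (s ∘ σ) := Tuple.monotone_sort s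
  set A : Finset (Fin n) := Finset.Iic k with hAdef
  have hA : A.card = k.1 + 1 := Fin.card_Iic k
  obtain ⟨c, -, hc⟩ := Finset.exists_lt_card_fiber_of_mul_lt_card_of_maps_to
    (s := A) (t := (Finset.univ : Finset (Fin m))) (f := fun i => μ (σ i)) (n := k.1 / m)
    (fun a _ => Finset.mem_univ _)
    (by
      rw [hA, Finset.card_univ, Fintype.card_fin]
      exact Nat.lt_succ_of_le (Nat.mul_div_le k.1 m))
  set B := Finset.filter (fun i => μ (σ i) = c) A with hBdef
  have hcB : k.1 / m < B.card := by
    refine lt_of_lt_of_le hc (le_of_eq ?_)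
    apply Finset.card_bij (fun a _ => a) <;> intros <;>
      simp_all [hBdef]
  have hinj : Set.InjOn (fun i => s (σ i) / p) B := by
    intro i hi i' hi' heq
    by_contra hne
    have hσne : σ i ≠ σ i' := fun h => hne (σ.injective h)
    have hμeq : μ (σ i) = μ (σ i') := by
      have h1 := (Finset.mem_filter.mp hi).2
      have h2 := (Finset.mem_filter.mp hi').2
      rw [h1, h2]
    have hd := hf (σ i) (σ i') hσne hμeq
    rw [Set.Ico_disjoint_Ico] at hd
    simp only at heq
    rcases le_total (s (σ i)) (s (σ i')) with h | h
    · have h1 : s (σ i) + p ≤ s (σ i') := by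
        have hmin : min (s (σ i) + p) (s (σ i') + p) = s (σ i) + p :=
          min_eq_left (by omega)
        have hmax : max (s (σ i)) (s (σ i')) = s (σ i') := max_eq_right h
        rw [hmin, hmax] at hd; exact hd
      have : s (σ i) / p + 1 ≤ s (σ i') / p := by
        rw [← Nat.add_div_right _ hp]
        exact Nat.div_le_div_right h1
      omega
    · have h1 : s (σ i') + p ≤ s (σ i) := by
        have hmin : min (s (σ i) + p) (s (σ i') + p) = s (σ i') + p :=
          min_eq_right (by omega)
        have hmax : max (s (σ i)) (s (σ i')) = s (σ i) := max_eq_left h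
        rw [hmin, hmax] at hd; exact hd
      have : s (σ i') / p + 1 ≤ s (σ i) / p := by
        rw [← Nat.add_div_right _ hp]
        exact Nat.div_le_div_right h1
      omega
  set T := B.image (fun i => s (σ i) / p) with hTdef
  have hTcard : T.card = B.card := Finset.card_image_of_injOn hinj
  have hTne : T.Nonempty := Finset.card_pos.mp
    (by rw [hTcard]; exact Nat.lt_of_le_of_lt (Nat.zero_le _) hcB)
  have hmax : k.1 / m ≤ T.max' hTne := by
    have hsub : T ⊆ Finset.range (T.max' hTne + 1) := by
      intro x hx
      simp only [Finset.mem_range, Nat.lt_succ_iff]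
      exact Finset.le_max' T x hx
    have hle := Finset.card_le_card hsub
    rw [Finset.card_range] at hle
    have h2 : k.1 / m < T.max' hTne + 1 :=
      lt_of_lt_of_le (lt_of_lt_of_le hcB (le_of_eq hTcard.symm)) hle
    exact Nat.lt_succ_iff.mp h2
  obtain ⟨i, hiB, hival⟩ := Finset.mem_image.mp (T.max'_mem hTne)
  have h1 : p * (k.1 / m) ≤ s (σ i) := by
    have h0 : k.1 / m ≤ s (σ i) / p := by rw [hival]; exact hmax
    rw [Nat.mul_comm]
    exact (Nat.le_div_iff_mul_le hp).mp h0
  have h2 : s (σ i) ≤ s (σ k) := by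
    have hik : i ≤ k := Finset.mem_Iic.mp (Finset.mem_filter.mp hiB).1
    exact hmono hik
  exact le_trans h1 h2

lemma exists_perm_le (m n p : ℕ) (hm : 1 ≤ m) (hp : 1 ≤ p) (d w : Fin n → ℕ)
    (μ : Fin n → Fin m) (s : Fin n → ℕ) (hf : PMFeasible m n p μ s) :
    ∃ σ : Equiv.Perm (Fin n), PermTardyCost m n p d w σ ≤ PMTardyCost n p d w s := by
  refine ⟨Tuple.sort s, ?_⟩
  set σ := Tuple.sort s with hσ
  have hcost : PMTardyCost n p d w s
      = ∑ k : Fin n, if d (σ k) < s (σ k) + p then w (σ k) else 0 :=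
    (Equiv.sum_comp σ (fun j => if d j < s j + p then w j else 0)).symm
  rw [PermTardyCost, hcost]
  apply Finset.sum_le_sum
  intro k _
  by_cases h1 : d (σ k) < p * ((k.1 + m) / m)
  · have hlb := schedule_start_lb m n p hm hp μ s hf k
    rw [← hσ] at hlb
    have h2 : p * ((k.1 + m) / m) = p * (k.1 / m) + p := by
      rw [Nat.add_div_right _ hm, Nat.mul_add, Nat.mul_one]
    have : d (σ k) < s (σ k) + p := by omega
    simp [h1, this]
  · simp [h1]

/-- For `P|p_j=p|Σ w_j U_j`, the minimum weighted number of tardy jobs over all feasible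
schedules equals the minimum over all permutations `σ` of
`Σ_k w_{σ(k)} · [ p·⌈k/m⌉ > d_{σ(k)} ]`; in particular, some permutation schedule, in which
the job completed `k`-th finishes exactly at time `p·⌈k/m⌉`, is optimal. -/
theorem parallelMachines_commonProcTime_weightedTardyJobs (m n p : ℕ) (hm : 1 ≤ m)
    (hp : 1 ≤ p) (d w : Fin n → ℕ) :
    sInf {v : ℕ | ∃ (μ : Fin n → Fin m) (s : Fin n → ℕ),
          PMFeasible m n p μ s ∧ PMTardyCost n p d w s = v}
        = sInf {v : ℕ | ∃ σ : Equiv.Perm (Fin n), PermTardyCost m n p d w σ = v} ∧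
      ∃ σ : Equiv.Perm (Fin n),
        PermTardyCost m n p d w σ
          = sInf {v : ℕ | ∃ (μ : Fin n → Fin m) (s : Fin n → ℕ),
              PMFeasible m n p μ s ∧ PMTardyCost n p d w s = v} := by
  set S1 := {v : ℕ | ∃ (μ : Fin n → Fin m) (s : Fin n → ℕ),
      PMFeasible m n p μ s ∧ PMTardyCost n p d w s = v} with hS1
  set S2 := {v : ℕ | ∃ σ : Equiv.Perm (Fin n), PermTardyCost m n p d w σ = v} with hS2
  have h21 : S2 ⊆ S1 := by
    rintro v ⟨σ, rfl⟩
    obtain ⟨μ, s, hfeas, hcost⟩ := perm_schedule_exists m n p hm hp d w σ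
    exact ⟨μ, s, hfeas, hcost⟩
  have hne2 : S2.Nonempty := ⟨_, 1, rfl⟩
  have hne1 : S1.Nonempty := hne2.mono h21
  have hle12 : sInf S1 ≤ sInf S2 := Nat.sInf_le (h21 (Nat.sInf_mem hne2))
  have hle21 : sInf S2 ≤ sInf S1 := by
    obtain ⟨μ, s, hfeas, hv⟩ := Nat.sInf_mem hne1
    obtain ⟨σ, hσ⟩ := exists_perm_le m n p hm hp d w μ s hfeas
    exact le_trans (Nat.sInf_le ⟨σ, rfl⟩) (by omega)
  have heq : sInf S1 = sInf S2 := le_antisymm hle12 hle21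
  refine ⟨heq, ?_⟩
  obtain ⟨σ, hσ⟩ := Nat.sInf_mem hne2
  exact ⟨σ, hσ.trans heq.symm⟩
end

section
/- A finite set S of fixed-interval jobs, where job j must be processed exactly during the half-open interval [r_j, d_j), can be feasibly scheduled on m ≥ 1 parallel identical machines — that is, there exists an assignment f : S → {1,…,m} such that any two distinct jobs j, j' ∈ S with f(j) = f(j') have disjoint intervals [r_j, d_j) and [r_{j'}, d_{j'}) — if and only if for every time point t, the number of jobs j ∈ S with r_j ≤ t < d_j is at most m. -/
private lemma fis_aux (m : ℕ) (hm : 1 ≤ m) (J : Type) [Fintype J] [DecidableEq J]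
    (r d : J → ℕ) (hrd : ∀ j : J, r j < d j) :
    ∀ (n : ℕ) (S : Finset J), S.card = n →
      (∀ t : ℕ, (S.filter fun j : J => r j ≤ t ∧ t < d j).card ≤ m) →
      ∃ f : J → Fin m, ∀ j ∈ S, ∀ j' ∈ S, j ≠ j' → f j = f j' →
        Disjoint (Set.Ico (r j) (d j)) (Set.Ico (r j') (d j')) := by
  intro n
  induction n with
  | zero =>
    intro S hS _
    exact ⟨fun _ => ⟨0, hm⟩, fun j hj => by simp [Finset.card_eq_zero.mp hS] at hj⟩
  | succ n ih =>
    intro S hS hcount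
    have hne : S.Nonempty := Finset.card_pos.mp (by omega)
    obtain ⟨j0, hj0S, hj0max⟩ := S.exists_max_image r hne
    set S' := S.erase j0 with hS'
    have hcard' : S'.card = n := by
      rw [hS', Finset.card_erase_of_mem hj0S, hS]
      omega
    have hcount' : ∀ t : ℕ, (S'.filter fun j : J => r j ≤ t ∧ t < d j).card ≤ m := by
      intro t
      exact le_trans (Finset.card_le_card (Finset.filter_subset_filter _ (S.erase_subset j0))) (hcount t)
    obtain ⟨f, hf⟩ := ih S' hcard' hcount'
    -- active jobs (other than j0) at time r j0
    set A := S'.filter (fun j : J => r j ≤ r j0 ∧ r j0 < d j) with hA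
    have hAcard : A.card < m := by
      have h1 : j0 ∈ S.filter (fun j : J => r j ≤ r j0 ∧ r j0 < d j) := by
        simp [hj0S, hrd j0]
      have h2 : A = (S.filter (fun j : J => r j ≤ r j0 ∧ r j0 < d j)).erase j0 := by
        rw [hA, hS', Finset.filter_erase]
      have h3 := hcount (r j0)
      rw [h2, Finset.card_erase_of_mem h1]
      omega
    -- find a free machine
    have hfree : ∃ c : Fin m, c ∉ A.image f := by
      by_contra hc
      push_neg at hc
      have : (Finset.univ : Finset (Fin m)) ⊆ A.image f := fun c _ => hc c
      have := Finset.card_le_card this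
      simp only [Finset.card_univ, Fintype.card_fin] at this
      have := Finset.card_image_le (s := A) (f := f)
      omega
    obtain ⟨c, hc⟩ := hfree
    refine ⟨Function.update f j0 c, ?_⟩
    intro j hj j' hj' hne' heq
    have key : ∀ j' ∈ S, j' ≠ j0 → f j' = c →
        Disjoint (Set.Ico (r j0) (d j0)) (Set.Ico (r j') (d j')) := by
      intro j' hj'S hj'ne hfc
      by_contra hdisj
      rw [Set.Ico_disjoint_Ico, not_le] at hdisj
      have hjA : j' ∈ A := by
        rw [hA]
        refine Finset.mem_filter.mpr ⟨Finset.mem_erase.mpr ⟨hj'ne, hj'S⟩, ?_, ?_⟩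
        · exact hj0max j' hj'S
        · calc r j0 ≤ max (r j0) (r j') := le_max_left _ _
            _ < min (d j0) (d j') := hdisj
            _ ≤ d j' := min_le_right _ _
      exact hc (Finset.mem_image.mpr ⟨j', hjA, hfc⟩)
    by_cases h1 : j = j0
    · have hj'ne : j' ≠ j0 := fun h => hne' (h1.trans h.symm)
      rw [h1, Function.update_self, Function.update_of_ne hj'ne] at heq
      rw [h1]
      exact key j' hj' hj'ne heq.symm
    · by_cases h2 : j' = j0
      · rw [h2, Function.update_self, Function.update_of_ne h1] at heq
        rw [h2]
        exact (key j hj h1 heq).symm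
      · rw [Function.update_of_ne h1, Function.update_of_ne h2] at heq
        exact hf j (Finset.mem_erase.mpr ⟨h1, hj⟩) j' (Finset.mem_erase.mpr ⟨h2, hj'⟩) hne' heq

/-- Fixed-interval scheduling on `m` parallel identical machines: a finite set of jobs,
each job `j` occupying exactly the half-open interval `[r j, d j)`, can be feasibly
assigned to `m` machines (jobs on the same machine have disjoint intervals) if and only
if at every time point `t` at most `m` jobs are active, i.e., satisfy `r j ≤ t < d j`. -/
theorem fixedIntervalScheduling_feasible_iff (m : ℕ) (hm : 1 ≤ m)
    (J : Type) [Fintype J] (r d : J → ℕ) (hrd : ∀ j : J, r j < d j) :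
    (∃ f : J → Fin m, ∀ j j' : J, j ≠ j' → f j = f j' →
        Disjoint (Set.Ico (r j) (d j)) (Set.Ico (r j') (d j'))) ↔
      ∀ t : ℕ, (Finset.univ.filter fun j : J => r j ≤ t ∧ t < d j).card ≤ m := by
  classical
  constructor
  · rintro ⟨f, hf⟩ t
    have hinj : Set.InjOn f (Finset.univ.filter fun j : J => r j ≤ t ∧ t < d j) := by
      intro j hj j' hj' heq
      by_contra hne
      simp only [Finset.coe_filter, Set.mem_setOf_eq] at hj hj'
      have := hf j j' hne heq
      exact (this.ne_of_mem (Set.mem_Ico.mpr ⟨hj.2.1, hj.2.2⟩)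
        (Set.mem_Ico.mpr ⟨hj'.2.1, hj'.2.2⟩)) rfl
    calc (Finset.univ.filter fun j : J => r j ≤ t ∧ t < d j).card
        ≤ (Finset.univ : Finset (Fin m)).card :=
          Finset.card_le_card_of_injOn f (fun _ _ => Finset.mem_univ _) hinj
      _ = m := by simp
  · intro hcount
    obtain ⟨f, hf⟩ := fis_aux m hm J r d hrd (Finset.univ : Finset J).card Finset.univ rfl hcount
    exact ⟨f, fun j j' => hf j (Finset.mem_univ j) j' (Finset.mem_univ j')⟩
end
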